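/- Let $\Theta_1 \subseteq \mathbb{R}^d$ be compact and convex, $V$ a fixed positive-definite $d\times d$ matrix, and $\|v\|_V = (v^T V^{-2} v)^{1/2}$. Let $\theta_* \notin \Theta_1$ and let $\theta_0 \in \Theta_1$ satisfy $\|\theta_0 - \theta_*\|_V = \min_{\theta \in \Theta_1} \|\theta - \theta_*\|_V$. Let $g_1 = \sum_{i=1}^m w_i g_{\theta_i}$ be any finite Gaussian mixture with $\theta_i \in \Theta_1$, $w_i \ge 0$, $\sum w_i = 1$, where $g_\theta$ is the density of $\mathcal{N}(\theta,V)$. Then $D_F(G_1 \| G_{\theta_*}) \ge D_F(G_{\theta_0} \| G_{\theta_*}) = \|\theta_0 - \theta_*\|_V^2$. -/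

import Mathlib

open MeasureTheory Matrix Finset

variable {d : ℕ}

/-- Density of the `d`-dimensional Gaussian `N(θ, V)`. -/
noncomputable def gaussDensity (V : Matrix (Fin d) (Fin d) ℝ) (θ x : EuclideanSpace ℝ (Fin d)) :
    ℝ :=
  Real.exp (-(1 / 2) * dotProduct (fun i => x i - θ i) (V⁻¹ *ᵥ fun i => x i - θ i)) /
    Real.sqrt ((2 * Real.pi) ^ d * V.det)

/-- The squared `V`-norm `‖v‖_V² = vᵀ V⁻² v`. -/
noncomputable def sqNormV (V : Matrix (Fin d) (Fin d) ℝ) (v : Fin d → ℝ) : ℝ :=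
  dotProduct v ((V⁻¹ * V⁻¹) *ᵥ v)

/-- Fisher divergence `D_F(P‖Q) = 𝔼_{X∼P}[‖∇ log p(X) − ∇ log q(X)‖²]`, `μP` the law of `P`. -/
noncomputable def fisherDivM (p q : EuclideanSpace ℝ (Fin d) → ℝ)
    (μP : Measure (EuclideanSpace ℝ (Fin d))) : ℝ :=
  ∫ x, ‖gradient (fun y => Real.log (p y)) x - gradient (fun y => Real.log (q y)) x‖ ^ 2 ∂μP

noncomputable def Tmap (V : Matrix (Fin d) (Fin d) ℝ) :
    EuclideanSpace ℝ (Fin d) →L[ℝ] EuclideanSpace ℝ (Fin d) :=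
  LinearMap.toContinuousLinearMap (Matrix.toEuclideanLin V⁻¹)

lemma Tmap_apply (V : Matrix (Fin d) (Fin d) ℝ) (v : EuclideanSpace ℝ (Fin d)) (i : Fin d) :
    Tmap V v i = (V⁻¹ *ᵥ (fun j => v j)) i := rfl

lemma Ainv_symm {V : Matrix (Fin d) (Fin d) ℝ} (hV : V.PosDef) : (V⁻¹)ᵀ = V⁻¹ := by
  have h : Vᵀ = V := by
    have := hV.1
    rwa [Matrix.IsHermitian, Matrix.conjTranspose_eq_transpose_of_trivial] at this
  rw [Matrix.transpose_nonsing_inv, h]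

lemma inner_eq_dot (u v : EuclideanSpace ℝ (Fin d)) :
    (inner ℝ u v : ℝ) = dotProduct (fun i => u i) (fun i => v i) := by
  simp [PiLp.inner_apply, dotProduct, RCLike.inner_apply, mul_comm]

lemma dot_symm_T {V : Matrix (Fin d) (Fin d) ℝ} (hV : V.PosDef)
    (u v : EuclideanSpace ℝ (Fin d)) :
    (inner ℝ u (Tmap V v) : ℝ) = (inner ℝ (Tmap V u) v : ℝ) := by
  rw [inner_eq_dot, inner_eq_dot]
  have : (fun i => Tmap V v i) = V⁻¹ *ᵥ (fun j => v j) := rfl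
  rw [this]
  have : (fun i => Tmap V u i) = V⁻¹ *ᵥ (fun j => u j) := rfl
  rw [this]
  rw [Matrix.dotProduct_mulVec, ← Matrix.mulVec_transpose, Ainv_symm hV,
    dotProduct_comm]

lemma norm_T_sq {V : Matrix (Fin d) (Fin d) ℝ} (hV : V.PosDef)
    (u : EuclideanSpace ℝ (Fin d)) :
    ‖Tmap V u‖ ^ 2 = dotProduct (fun i => u i) ((V⁻¹ * V⁻¹) *ᵥ (fun i => u i)) := by
  rw [← real_inner_self_eq_norm_sq, dot_symm_T hV, inner_eq_dot]
  have h1 : (fun i => Tmap V (Tmap V u) i) = V⁻¹ *ᵥ (V⁻¹ *ᵥ (fun j => u j)) := rfl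
  rw [h1, Matrix.mulVec_mulVec, dotProduct_comm]

lemma sqrtconst_pos {V : Matrix (Fin d) (Fin d) ℝ} (hV : V.PosDef) :
    0 < Real.sqrt ((2 * Real.pi) ^ d * V.det) := by
  apply Real.sqrt_pos.2
  exact mul_pos (pow_pos (by positivity) d) hV.det_pos

lemma gauss_pos {V : Matrix (Fin d) (Fin d) ℝ} (hV : V.PosDef)
    (θ x : EuclideanSpace ℝ (Fin d)) : 0 < gaussDensity V θ x :=
  div_pos (Real.exp_pos _) (sqrtconst_pos hV)

lemma quad_eq_inner (V : Matrix (Fin d) (Fin d) ℝ) (θ y : EuclideanSpace ℝ (Fin d)) :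
    dotProduct (fun i => y i - θ i) (V⁻¹ *ᵥ fun i => y i - θ i)
      = (inner ℝ (y - θ) (Tmap V (y - θ)) : ℝ) := by
  rw [inner_eq_dot]; rfl

lemma log_gauss_eq {V : Matrix (Fin d) (Fin d) ℝ} (hV : V.PosDef)
    (θ : EuclideanSpace ℝ (Fin d)) :
    (fun y => Real.log (gaussDensity V θ y)) =
      fun y => -(1 / 2) * (inner ℝ (y - θ) (Tmap V (y - θ)) : ℝ)
        - Real.log (Real.sqrt ((2 * Real.pi) ^ d * V.det)) := by
  funext y
  rw [gaussDensity, Real.log_div (Real.exp_ne_zero _) (sqrtconst_pos hV).ne',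
    Real.log_exp, quad_eq_inner]

lemma hasGradientAt_log_gauss {V : Matrix (Fin d) (Fin d) ℝ} (hV : V.PosDef)
    (θ x : EuclideanSpace ℝ (Fin d)) :
    HasGradientAt (fun y => Real.log (gaussDensity V θ y)) (Tmap V (θ - x)) x := by
  rw [log_gauss_eq hV]
  rw [hasGradientAt_iff_hasFDerivAt]
  have hf : HasFDerivAt (fun y : EuclideanSpace ℝ (Fin d) => y - θ)
      (ContinuousLinearMap.id ℝ (EuclideanSpace ℝ (Fin d))) x :=
    (hasFDerivAt_id x).sub_const θ
  have hg : HasFDerivAt (fun y : EuclideanSpace ℝ (Fin d) => Tmap V (y - θ))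
      (Tmap V) x := by
    have := (Tmap V).hasFDerivAt.comp x hf
    simp only [ContinuousLinearMap.comp_id] at this
    exact this
  have hQ := (hf.inner ℝ hg)
  have h2 := (hQ.const_mul (-(1/2) : ℝ)).sub_const
    (Real.log (Real.sqrt ((2 * Real.pi) ^ d * V.det)))
  refine h2.congr_fderiv (Eq.symm ?_)
  ext h
  simp only [InnerProductSpace.toDual_apply_apply, ContinuousLinearMap.smul_apply,
    ContinuousLinearMap.comp_apply, ContinuousLinearMap.prod_apply,
    ContinuousLinearMap.id_apply, fderivInnerCLM_apply, smul_eq_mul]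
  have e1 : (inner ℝ (x - θ) ((Tmap V) h) : ℝ) = inner ℝ h ((Tmap V) (x - θ)) := by
    rw [dot_symm_T hV, real_inner_comm]
  have e2 : (Tmap V) (θ - x) = -((Tmap V) (x - θ)) := by
    rw [← map_neg]; congr 1; abel
  rw [e1, e2, inner_neg_left, real_inner_comm ((Tmap V) (x - θ)) h]
  ring

lemma hasGradientAt_gauss {V : Matrix (Fin d) (Fin d) ℝ} (hV : V.PosDef)
    (θ x : EuclideanSpace ℝ (Fin d)) :
    HasGradientAt (gaussDensity V θ)
      (gaussDensity V θ x • Tmap V (θ - x)) x := by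
  have hL := (hasGradientAt_log_gauss hV θ x).hasFDerivAt
  have hexp := hL.exp
  have hfun : (fun y => Real.exp (Real.log (gaussDensity V θ y))) = gaussDensity V θ := by
    funext y; exact Real.exp_log (gauss_pos hV θ y)
  rw [hfun, Real.exp_log (gauss_pos hV θ x)] at hexp
  rw [hasGradientAt_iff_hasFDerivAt]
  refine hexp.congr_fderiv (Eq.symm ?_)
  simp

lemma continuous_gauss (V : Matrix (Fin d) (Fin d) ℝ) (θ : EuclideanSpace ℝ (Fin d)) :
    Continuous (gaussDensity V θ) := by
  unfold gaussDensity dotProduct Matrix.mulVec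
  fun_prop

/-- the Gaussian `N(θ₀, V)` with `θ₀` the `‖·‖_V`-projection of `θ*` onto the
compact convex set `Θ₁` is least favorable among all finite Gaussian mixtures over `Θ₁`:
`D_F(G₁‖G_{θ*}) ≥ D_F(G_{θ₀}‖G_{θ*}) = ‖θ₀ − θ*‖_V²`. -/
theorem gaussian_mixture_LFD
    (V : Matrix (Fin d) (Fin d) ℝ) (hV : V.PosDef)
    (Θ1 : Set (EuclideanSpace ℝ (Fin d))) (hcmpt : IsCompact Θ1) (hconv : Convex ℝ Θ1)
    (θs : EuclideanSpace ℝ (Fin d)) (hθs : θs ∉ Θ1)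
    (θ0 : EuclideanSpace ℝ (Fin d)) (hθ0 : θ0 ∈ Θ1)
    (hproj : ∀ θ ∈ Θ1, Real.sqrt (sqNormV V (fun i => θ0 i - θs i)) ≤
      Real.sqrt (sqNormV V (fun i => θ i - θs i)))
    (m : ℕ) (hm : 1 ≤ m) (w : Fin m → ℝ) (θ : Fin m → EuclideanSpace ℝ (Fin d))
    (hw_nonneg : ∀ i, 0 ≤ w i) (hw_sum : ∑ i, w i = 1) (hθmem : ∀ i, θ i ∈ Θ1)
    (g1 : EuclideanSpace ℝ (Fin d) → ℝ)
    (hg1 : g1 = fun x => ∑ i, w i * gaussDensity V (θ i) x)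
    (μ1 μ0 : Measure (EuclideanSpace ℝ (Fin d)))
    [IsProbabilityMeasure μ1] [IsProbabilityMeasure μ0]
    (hμ1 : μ1 = volume.withDensity (fun x => ENNReal.ofReal (g1 x)))
    (hμ0 : μ0 = volume.withDensity (fun x => ENNReal.ofReal (gaussDensity V θ0 x))) :
    fisherDivM (gaussDensity V θ0) (gaussDensity V θs) μ0 ≤
        fisherDivM g1 (gaussDensity V θs) μ1 ∧
      fisherDivM (gaussDensity V θ0) (gaussDensity V θs) μ0 =
        sqNormV V (fun i => θ0 i - θs i) := by
  classical
  have hgrads : ∀ x, gradient (fun y => Real.log (gaussDensity V θs y)) x = Tmap V (θs - x) :=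
    fun x => (hasGradientAt_log_gauss hV θs x).gradient
  have hgrad0 : ∀ x, gradient (fun y => Real.log (gaussDensity V θ0 y)) x = Tmap V (θ0 - x) :=
    fun x => (hasGradientAt_log_gauss hV θ0 x).gradient
  have hconst : (fun x => ‖gradient (fun y => Real.log (gaussDensity V θ0 y)) x -
      gradient (fun y => Real.log (gaussDensity V θs y)) x‖ ^ 2)
      = fun _ => sqNormV V (fun i => θ0 i - θs i) := by
    funext x
    rw [hgrad0, hgrads, ← map_sub]
    have h : (θ0 - x) - (θs - x) = θ0 - θs := by abel
    rw [h, norm_T_sq hV]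
    rfl
  have heq0 : fisherDivM (gaussDensity V θ0) (gaussDensity V θs) μ0
      = sqNormV V (fun i => θ0 i - θs i) := by
    rw [fisherDivM, hconst, integral_const, probReal_univ, one_smul]
  refine ⟨?_, heq0⟩
  have hg1pos : ∀ x, 0 < g1 x := by
    intro x
    rw [hg1]
    obtain ⟨i0, hi0⟩ : ∃ i, 0 < w i := by
      by_contra hcon
      push_neg at hcon
      have h0 : ∑ i, w i = 0 :=
        Finset.sum_eq_zero fun i _ => le_antisymm (hcon i) (hw_nonneg i)
      rw [hw_sum] at h0; norm_num at h0
    exact Finset.sum_pos'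
      (fun i _ => mul_nonneg (hw_nonneg i) (gauss_pos hV _ _).le)
      ⟨i0, Finset.mem_univ _, mul_pos hi0 (gauss_pos hV _ _)⟩
  set β : EuclideanSpace ℝ (Fin d) → Fin m → ℝ :=
    fun x i => (g1 x)⁻¹ * (w i * gaussDensity V (θ i) x) with hβ
  set θb : EuclideanSpace ℝ (Fin d) → EuclideanSpace ℝ (Fin d) :=
    fun x => ∑ i, β x i • θ i with hθbdef
  have hβnonneg : ∀ x i, 0 ≤ β x i := fun x i =>
    mul_nonneg (inv_nonneg.2 (hg1pos x).le)
      (mul_nonneg (hw_nonneg i) (gauss_pos hV _ _).le)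
  have hβsum : ∀ x, ∑ i, β x i = 1 := by
    intro x
    have hsum : ∑ i, w i * gaussDensity V (θ i) x = g1 x := by rw [hg1]
    calc ∑ i, β x i = (g1 x)⁻¹ * ∑ i, w i * gaussDensity V (θ i) x := by
          rw [Finset.mul_sum]
      _ = 1 := by rw [hsum, inv_mul_cancel₀ (hg1pos x).ne']
  have hθbmem : ∀ x, θb x ∈ Θ1 := fun x =>
    hconv.sum_mem (fun i _ => hβnonneg x i) (hβsum x) (fun i _ => hθmem i)
  have hgrad1 : ∀ x, gradient (fun y => Real.log (g1 y)) x
      = Tmap V (θb x) - Tmap V x := by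
    intro x
    apply HasGradientAt.gradient
    rw [hasGradientAt_iff_hasFDerivAt]
    have hsum : HasFDerivAt g1
        (∑ i, (w i) • ((InnerProductSpace.toDual ℝ (EuclideanSpace ℝ (Fin d)))
          (gaussDensity V (θ i) x • Tmap V (θ i - x)))) x := by
      rw [hg1]
      exact HasFDerivAt.fun_sum fun i _ =>
        ((hasGradientAt_gauss hV (θ i) x).hasFDerivAt.const_mul (w i))
    have hlog := hsum.log (hg1pos x).ne'
    have hvec : (g1 x)⁻¹ • ∑ i, w i •
          (gaussDensity V (θ i) x • Tmap V (θ i - x))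
        = Tmap V (θb x) - Tmap V x := by
      rw [Finset.smul_sum]
      have hterm : ∀ i : Fin m, (g1 x)⁻¹ • (w i •
            (gaussDensity V (θ i) x • Tmap V (θ i - x)))
          = β x i • Tmap V (θ i) - β x i • Tmap V x := by
        intro i
        rw [map_sub, smul_smul, smul_smul, smul_sub, mul_assoc]
      rw [Finset.sum_congr rfl (fun i _ => hterm i), Finset.sum_sub_distrib,
        ← Finset.sum_smul, hβsum, one_smul]
      congr 1
      rw [hθbdef]
      simp [map_sum, _root_.map_smul]
    have hEq : (InnerProductSpace.toDual ℝ (EuclideanSpace ℝ (Fin d)))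
          (Tmap V (θb x) - Tmap V x)
        = (g1 x)⁻¹ • ∑ i, (w i) • ((InnerProductSpace.toDual ℝ (EuclideanSpace ℝ (Fin d)))
            (gaussDensity V (θ i) x • Tmap V (θ i - x))) := by
      rw [← hvec]
      simp [map_sum, _root_.map_smul, Finset.smul_sum]
    rw [hEq]
    exact hlog
  have hint1 : (fun x => ‖gradient (fun y => Real.log (g1 y)) x -
      gradient (fun y => Real.log (gaussDensity V θs y)) x‖ ^ 2)
      = fun x => ‖Tmap V (θb x - θs)‖ ^ 2 := by
    funext x
    rw [hgrad1 x, hgrads x]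
    have h : (Tmap V (θb x) - Tmap V x) - Tmap V (θs - x) = Tmap V (θb x - θs) := by
      rw [map_sub, map_sub]
      abel
    rw [h]
  have hsqe : ∀ u v : EuclideanSpace ℝ (Fin d),
      sqNormV V (fun i => u i - v i) = ‖Tmap V (u - v)‖ ^ 2 := by
    intro u v
    rw [norm_T_sq hV]
    rfl
  have hlow : ∀ x, sqNormV V (fun i => θ0 i - θs i) ≤ ‖Tmap V (θb x - θs)‖ ^ 2 := by
    intro x
    have h1 := hproj (θb x) (hθbmem x)
    have h0 : (0:ℝ) ≤ sqNormV V (fun i => θ0 i - θs i) := by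
      rw [hsqe]; positivity
    have h0' : (0:ℝ) ≤ sqNormV V (fun i => θb x i - θs i) := by
      rw [hsqe]; positivity
    calc sqNormV V (fun i => θ0 i - θs i)
        = Real.sqrt (sqNormV V (fun i => θ0 i - θs i)) ^ 2 := (Real.sq_sqrt h0).symm
      _ ≤ Real.sqrt (sqNormV V (fun i => θb x i - θs i)) ^ 2 :=
          pow_le_pow_left₀ (Real.sqrt_nonneg _) h1 2
      _ = sqNormV V (fun i => θb x i - θs i) := Real.sq_sqrt h0'
      _ = ‖Tmap V (θb x - θs)‖ ^ 2 := hsqe _ _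
  obtain ⟨R, hR⟩ := hcmpt.isBounded.subset_closedBall 0
  have hg1cont : Continuous g1 := by
    rw [hg1]
    exact continuous_finset_sum _ fun i _ => continuous_const.mul (continuous_gauss V (θ i))
  have hθbcont : Continuous θb := by
    apply continuous_finset_sum
    intro i _
    refine Continuous.smul (f := fun x => β x i) (g := fun _ => θ i) ?_ continuous_const
    exact (hg1cont.inv₀ fun x => (hg1pos x).ne').mul
      (continuous_const.mul (continuous_gauss V (θ i)))
  have hcont : Continuous fun x => ‖Tmap V (θb x - θs)‖ ^ 2 :=
    (((Tmap V).continuous.comp (hθbcont.sub continuous_const)).norm).pow 2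
  have hbound : ∀ x, ‖Tmap V (θb x - θs)‖ ≤ ‖Tmap V‖ * (R + ‖θs‖) := by
    intro x
    refine ((Tmap V).le_opNorm _).trans ?_
    refine mul_le_mul_of_nonneg_left ?_ (norm_nonneg _)
    refine (norm_sub_le _ _).trans (add_le_add ?_ le_rfl)
    have := hR (hθbmem x)
    simpa [Metric.mem_closedBall, dist_zero_right] using this
  have hF_int : Integrable (fun x => ‖Tmap V (θb x - θs)‖ ^ 2) μ1 := by
    refine ⟨hcont.aestronglyMeasurable, ?_⟩
    apply MeasureTheory.HasFiniteIntegral.of_bounded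
      (C := (‖Tmap V‖ * (R + ‖θs‖)) ^ 2)
    refine ae_of_all _ fun x => ?_
    rw [Real.norm_eq_abs, abs_of_nonneg (by positivity)]
    exact pow_le_pow_left₀ (norm_nonneg _) (hbound x) 2
  rw [heq0, fisherDivM, hint1]
  calc sqNormV V (fun i => θ0 i - θs i)
      = ∫ _, sqNormV V (fun i => θ0 i - θs i) ∂μ1 := by
        rw [integral_const, probReal_univ, one_smul]
    _ ≤ ∫ x, ‖Tmap V (θb x - θs)‖ ^ 2 ∂μ1 :=
        integral_mono (integrable_const _) hF_int hlow
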